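/- For q a power of 2 and n odd, there are no n × n symmetric invertible matrices over F_q with zero diagonal; for n even, their number is q^{C(n,2)} · ∏_{j=1}^{⌈(n−1)/2⌉} (1 − q^{1−2j}). -/

import Mathlib

open Matrix Finset
set_option linter.unusedSectionVars false
set_option maxHeartbeats 1000000
attribute [local instance] Classical.propDecidable
noncomputable section
namespace Stmt7

variable {F : Type} [Field F] [Fintype F]
variable {ι : Type} [Fintype ι] [DecidableEq ι]

lemma char2 (hF2 : (2 : F) = 0) (a : F) : a + a = 0 := by
  have : a + a = 2 * a := by ring
  rw [this, hF2, zero_mul]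

lemma quad_zero (hF2 : (2 : F) = 0)
    {M : Matrix ι ι F} (hs : M.IsSymm) (hd : ∀ i, M i i = 0) (x : ι → F) :
    x ⬝ᵥ (M *ᵥ x) = 0 := by
  have : x ⬝ᵥ (M *ᵥ x) = ∑ p : ι × ι, x p.1 * M p.1 p.2 * x p.2 := by
    rw [Fintype.sum_prod_type]
    simp [dotProduct, mulVec, Finset.mul_sum, mul_assoc]
  rw [this]
  apply Finset.sum_involution (fun p _ => (p.2, p.1))
  · intro p _
    have hM : M p.2 p.1 = M p.1 p.2 := by
      conv_lhs => rw [← hs]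
      rfl
    simp only [hM]
    have : x p.1 * M p.1 p.2 * x p.2 + x p.2 * M p.1 p.2 * x p.1
        = (2 : F) * (x p.1 * M p.1 p.2 * x p.2) := by ring
    rw [this, hF2, zero_mul]
  · intro p _ hne h
    have h1 : p.2 = p.1 := congrArg Prod.fst h
    apply hne
    rw [← h1, hd, mul_zero, zero_mul]
  · intro p _; exact Finset.mem_univ _
  · intro p _; rfl

lemma cong_mem (hF2 : (2 : F) = 0) {M Q : Matrix ι ι F}
    (h : M.IsSymm ∧ (∀ i, M i i = 0) ∧ IsUnit M.det) (hQ : IsUnit Q.det) :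
    (Q * M * Qᵀ).IsSymm ∧ (∀ i, (Q * M * Qᵀ) i i = 0) ∧ IsUnit (Q * M * Qᵀ).det := by
  obtain ⟨hs, hd, hu⟩ := h
  refine ⟨?_, ?_, ?_⟩
  · unfold Matrix.IsSymm
    rw [transpose_mul, transpose_mul, transpose_transpose, hs.eq, Matrix.mul_assoc]
  · intro i
    have h1 : (Q * M * Qᵀ) i i = Q i ⬝ᵥ (M *ᵥ Q i) := by
      simp only [Matrix.mul_apply, transpose_apply, dotProduct, mulVec,
        Finset.mul_sum, Finset.sum_mul]
      rw [Finset.sum_comm]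
      apply Finset.sum_congr rfl; intro k _
      apply Finset.sum_congr rfl; intro l _
      ring
    rw [h1, quad_zero hF2 hs hd]
  · rw [det_mul, det_mul, det_transpose]
    exact (hQ.mul hu).mul hQ

lemma cong_row {M Q : Matrix ι ι F} {i₀ : ι} (hrow : Q i₀ = Pi.single i₀ 1)
    {r : ι → F} (hM : M i₀ = r) : (Q * M * Qᵀ) i₀ = Q *ᵥ r := by
  funext j
  rw [Matrix.mul_assoc]
  have h1 : (Q * (M * Qᵀ)) i₀ j = ∑ k, Q i₀ k * (M * Qᵀ) k j := Matrix.mul_apply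
  have h2 : ∑ k, Q i₀ k * (M * Qᵀ) k j = (M * Qᵀ) i₀ j := by
    simp only [hrow]
    simp [Pi.single_apply, ite_mul]
  rw [h1, h2]
  simp [Matrix.mul_apply, hM, mulVec, dotProduct, transpose_apply, mul_comm]
variable {F : Type} [Field F]
variable {ι : Type} [Fintype ι] [DecidableEq ι]

lemma exists_Q {i₀ i₁ : ι} (h01 : i₀ ≠ i₁) {r : ι → F} (hr0 : r i₀ = 0) (hr : r ≠ 0) :
    ∃ Q : Matrix ι ι F, IsUnit Q.det ∧ Q i₀ = Pi.single i₀ 1 ∧ Q *ᵥ r = Pi.single i₁ 1 := by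
  obtain ⟨j₀, hj₀⟩ : ∃ j, r j ≠ 0 := by
    by_contra h
    push_neg at h
    exact hr (funext h)
  have hi₀j₀ : i₀ ≠ j₀ := fun h => hj₀ (h ▸ hr0)
  set V : Matrix ι ι F := (1 : Matrix ι ι F).updateCol j₀ r with hV
  have hdetV : V.det = r j₀ := by
    have := Matrix.cramer_apply (1 : Matrix ι ι F) r j₀
    rw [Matrix.cramer_one] at this
    exact this.symm
  have hVunit : IsUnit V.det := by rw [hdetV]; exact Ne.isUnit hj₀
  set σ : Equiv.Perm ι := Equiv.swap i₁ j₀ with hσ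
  have hσsymm : σ.symm = σ := Equiv.symm_swap i₁ j₀
  have hσi₀ : σ i₀ = i₀ := Equiv.swap_apply_of_ne_of_ne h01 hi₀j₀
  set Q : Matrix ι ι F := (V⁻¹).submatrix (⇑σ.symm) id with hQ
  have hVrow : V i₀ = Pi.single i₀ 1 := by
    funext j
    rw [hV, Matrix.updateCol_apply]
    by_cases h : j = j₀
    · subst h
      rw [if_pos rfl, hr0, Pi.single_eq_of_ne (Ne.symm hi₀j₀)]
    · rw [if_neg h, Matrix.one_apply, Pi.single_apply]
      by_cases h2 : i₀ = j
      · rw [if_pos h2, if_pos h2.symm]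
      · rw [if_neg h2, if_neg (Ne.symm h2)]
  have e1 : Pi.single i₀ (1:F) ᵥ* V = Pi.single i₀ 1 := by
    rw [Matrix.single_vecMul]
    simpa [Matrix.row] using hVrow
  have e2 : Pi.single i₀ (1:F) ᵥ* V⁻¹ = V⁻¹ i₀ := by
    rw [Matrix.single_vecMul]; simp [Matrix.row]
  have e3 : V⁻¹ i₀ = Pi.single i₀ 1 := by
    rw [← e2]
    conv_lhs => rw [← e1]
    rw [Matrix.vecMul_vecMul, Matrix.mul_nonsing_inv V hVunit, Matrix.vecMul_one]
  have hv : V *ᵥ Pi.single j₀ (1:F) = r := by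
    funext i
    rw [Matrix.mulVec_single]
    simp [hV, Matrix.updateCol_apply]
  have hinvr : V⁻¹ *ᵥ r = Pi.single j₀ 1 := by
    rw [← hv, Matrix.mulVec_mulVec, Matrix.nonsing_inv_mul V hVunit, Matrix.one_mulVec]
  refine ⟨Q, ?_, ?_, ?_⟩
  · rw [hQ, Matrix.det_permute]
    apply IsUnit.mul
    · rcases Int.units_eq_one_or (Equiv.Perm.sign σ.symm) with h | h <;> rw [h] <;> simp
    · exact V.isUnit_nonsing_inv_det hVunit
  · funext j
    rw [hQ]
    show V⁻¹ (σ.symm i₀) j = _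
    rw [hσsymm, hσi₀, e3]
  · funext i
    have : (Q *ᵥ r) i = (V⁻¹ *ᵥ r) (σ.symm i) := by
      simp [hQ, Matrix.mulVec, dotProduct, Matrix.submatrix_apply]
    rw [this, hinvr, hσsymm]
    rw [Pi.single_apply, Pi.single_apply]
    congr 1
    simp only [eq_iff_iff]
    constructor
    · intro h
      exact σ.injective (h.trans (Equiv.swap_apply_left i₁ j₀).symm)
    · intro h
      rw [h]
      exact Equiv.swap_apply_left i₁ j₀
variable {F : Type} [Field F]
variable {n : ℕ}

abbrev Idx (n : ℕ) := Fin 2 ⊕ Fin n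

def eOne (n : ℕ) : Idx n → F := Pi.single (Sum.inl 1) 1

def A2 : Matrix (Fin 2) (Fin 2) F := !![0,1;1,0]

lemma A2_mul_A2 : (A2 : Matrix (Fin 2) (Fin 2) F) * A2 = 1 := by
  ext i j
  fin_cases i <;> fin_cases j <;>
    simp [A2, Matrix.mul_apply, Fin.sum_univ_two, Matrix.one_apply]

noncomputable instance : Invertible (A2 : Matrix (Fin 2) (Fin 2) F) :=
  ⟨A2, A2_mul_A2, A2_mul_A2⟩

lemma A2_det : (A2 : Matrix (Fin 2) (Fin 2) F).det = -1 := by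
  simp [A2, Matrix.det_fin_two]

def B1 (b : Fin n → F) : Matrix (Fin 2) (Fin n) F :=
  Matrix.of fun i j => if i = 1 then b j else 0

def mkM (b : Fin n → F) (C : Matrix (Fin n) (Fin n) F) : Matrix (Idx n) (Idx n) F :=
  Matrix.fromBlocks A2 (B1 b) (B1 b)ᵀ C

lemma schur (b : Fin n → F) :
    (B1 b)ᵀ * ⅟(A2 : Matrix (Fin 2) (Fin 2) F) * B1 b = 0 := by
  have hinv : ⅟(A2 : Matrix (Fin 2) (Fin 2) F) = A2 := rfl
  rw [hinv]
  ext j l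
  simp [Matrix.mul_apply, Fin.sum_univ_two, A2, B1]

lemma mk_det (b : Fin n → F) (C : Matrix (Fin n) (Fin n) F) :
    (mkM b C).det = -C.det := by
  rw [mkM, Matrix.det_fromBlocks₁₁, schur, sub_zero, A2_det, neg_one_mul]

lemma mk_det_isUnit_iff (b : Fin n → F) (C : Matrix (Fin n) (Fin n) F) :
    IsUnit (mkM b C).det ↔ IsUnit C.det := by
  rw [mk_det, IsUnit.neg_iff]

lemma A2_symm : (A2 : Matrix (Fin 2) (Fin 2) F)ᵀ = A2 := by
  ext i j; fin_cases i <;> fin_cases j <;> simp [A2]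

lemma mk_isSymm (b : Fin n → F) {C : Matrix (Fin n) (Fin n) F} (hC : C.IsSymm) :
    (mkM b C).IsSymm := by
  unfold Matrix.IsSymm mkM
  rw [Matrix.fromBlocks_transpose, transpose_transpose, hC.eq, A2_symm]

lemma mk_diag (b : Fin n → F) {C : Matrix (Fin n) (Fin n) F} (hC : ∀ i, C i i = 0)
    (i : Idx n) : mkM b C i i = 0 := by
  cases i with
  | inl i => fin_cases i <;> simp [mkM, A2]
  | inr j => exact hC j

lemma mk_row (b : Fin n → F) (C : Matrix (Fin n) (Fin n) F) :
    mkM b C (Sum.inl 0) = eOne n := by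
  funext j
  cases j with
  | inl k =>
      fin_cases k <;> simp [mkM, A2, eOne, Pi.single_apply]
  | inr j => simp [mkM, B1, eOne, Pi.single_apply]

lemma recon {M : Matrix (Idx n) (Idx n) F} (hs : M.IsSymm) (hd : ∀ i, M i i = 0)
    (hrow : M (Sum.inl 0) = eOne n) :
    M = mkM (fun j => M (Sum.inl 1) (Sum.inr j)) (M.submatrix Sum.inr Sum.inr) := by
  have hsym : ∀ i j, M j i = M i j := fun i j => by
    conv_lhs => rw [← hs]
    rfl
  have hr : ∀ j, M (Sum.inl 0) j = eOne n j := fun j => congrFun hrow j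
  ext i j
  cases i with
  | inl i =>
    cases j with
    | inl j =>
        fin_cases i <;> fin_cases j <;>
          simp [mkM, A2] <;>
          first
            | (rw [hr]; simp [eOne, Pi.single_apply])
            | (rw [hsym (Sum.inl 0) (Sum.inl 1), hr]; simp [eOne, Pi.single_apply])
            | exact hd _
    | inr j =>
        fin_cases i <;> simp [mkM, B1]
        rw [hr]; simp [eOne, Pi.single_apply]
  | inr i =>
    cases j with
    | inl j =>
        fin_cases j <;> simp [mkM, B1]
        · rw [hsym (Sum.inl 0) (Sum.inr i), hr]; simp [eOne, Pi.single_apply]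
        · exact hsym (Sum.inl 1) (Sum.inr i)
    | inr j => simp [mkM]

lemma subC_isSymm {M : Matrix (Idx n) (Idx n) F} (hs : M.IsSymm) :
    (M.submatrix Sum.inr Sum.inr).IsSymm := by
  have hsym : ∀ i j, M j i = M i j := fun i j => by
    conv_lhs => rw [← hs]
    rfl
  unfold Matrix.IsSymm
  ext i j
  exact hsym _ _

/-- fiber equivalence -/
noncomputable def fiberEquiv (n : ℕ) :
    {M : Matrix (Idx n) (Idx n) F //
        (M.IsSymm ∧ (∀ i, M i i = 0) ∧ IsUnit M.det) ∧ M (Sum.inl 0) = eOne n}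
      ≃ (Fin n → F) ×
        {C : Matrix (Fin n) (Fin n) F // C.IsSymm ∧ (∀ i, C i i = 0) ∧ IsUnit C.det} where
  toFun M := ⟨fun j => M.1 (Sum.inl 1) (Sum.inr j),
    ⟨M.1.submatrix Sum.inr Sum.inr,
      subC_isSymm M.2.1.1,
      fun i => M.2.1.2.1 (Sum.inr i),
      by
        have h := recon M.2.1.1 M.2.1.2.1 M.2.2
        have hu := M.2.1.2.2
        rw [h, mk_det_isUnit_iff] at hu
        exact hu⟩⟩
  invFun p := ⟨mkM p.1 p.2.1,
    ⟨⟨mk_isSymm p.1 p.2.2.1, mk_diag p.1 p.2.2.2.1, (mk_det_isUnit_iff _ _).2 p.2.2.2.2⟩,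
      mk_row p.1 p.2.1⟩⟩
  left_inv M := by
    apply Subtype.ext
    exact (recon M.2.1.1 M.2.1.2.1 M.2.2).symm
  right_inv p := by
    ext j
    · simp [mkM, B1]
    · simp [mkM]

variable {F : Type} [Field F] [Fintype F]

-- reindexing S-types
def reindexEquiv {ι ι' : Type} [Fintype ι] [DecidableEq ι] [Fintype ι'] [DecidableEq ι']
    (e : ι ≃ ι') :
    {M : Matrix ι ι F // M.IsSymm ∧ (∀ i, M i i = 0) ∧ IsUnit M.det}
      ≃ {M : Matrix ι' ι' F // M.IsSymm ∧ (∀ i, M i i = 0) ∧ IsUnit M.det} := by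
  refine Equiv.subtypeEquiv (Matrix.reindex e e) ?_
  intro M
  constructor
  · rintro ⟨hs, hd, hu⟩
    refine ⟨?_, ?_, ?_⟩
    · unfold Matrix.IsSymm
      rw [Matrix.reindex_apply, Matrix.transpose_submatrix, hs.eq]
    · intro i; simp [Matrix.reindex_apply, Matrix.submatrix_apply, hd]
    · rwa [Matrix.det_reindex_self]
  · rintro ⟨hs, hd, hu⟩
    refine ⟨?_, ?_, ?_⟩
    · unfold Matrix.IsSymm
      have := hs.eq
      rw [Matrix.reindex_apply, Matrix.transpose_submatrix] at this
      have h2 := congrArg (fun A : Matrix ι' ι' F => Matrix.submatrix A ⇑e ⇑e) this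
      simpa using h2
    · intro i
      have := hd (e i)
      simpa using this
    · have := hu
      rwa [Matrix.det_reindex_self] at this

lemma card_ne_zero_fun {κ : Type} [Fintype κ] [DecidableEq κ] :
    Nat.card {v : κ → F // v ≠ 0} = Fintype.card F ^ Fintype.card κ - 1 := by
  rw [Nat.card_eq_fintype_card]
  have h1 : Fintype.card {v : κ → F // v ≠ 0}
      = Fintype.card (κ → F) - Fintype.card {v : κ → F // v = 0} := by
    classical
    have := Fintype.card_subtype_compl (fun v : κ → F => v = 0)
    simp only [ne_eq]
    convert this using 2
  rw [h1, Fintype.card_fun]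
  have h2 : Fintype.card {v : κ → F // v = 0} = 1 := by
    rw [Fintype.card_eq_one_iff]
    exact ⟨⟨0, rfl⟩, fun y => Subtype.ext y.2⟩
  rw [h2]

end Stmt7
namespace Stmt7
variable {F : Type} [Field F] [Fintype F]
variable {ι : Type} [Fintype ι] [DecidableEq ι]

lemma inv_row {Q : Matrix ι ι F} {i₀ : ι} (hu : IsUnit Q.det)
    (hrow : Q i₀ = Pi.single i₀ 1) : Q⁻¹ i₀ = Pi.single i₀ 1 := by
  have e1 : Pi.single i₀ (1:F) ᵥ* Q = Pi.single i₀ 1 := by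
    rw [Matrix.single_vecMul]
    simp [Matrix.row, hrow]
  have e2 : Pi.single i₀ (1:F) ᵥ* Q⁻¹ = Q⁻¹ i₀ := by
    rw [Matrix.single_vecMul]; simp [Matrix.row]
  rw [← e2]
  conv_lhs => rw [← e1]
  rw [Matrix.vecMul_vecMul, Matrix.mul_nonsing_inv Q hu, Matrix.vecMul_one]

lemma cong_cancel {Q : Matrix ι ι F} (hu : IsUnit Q.det) (M : Matrix ι ι F) :
    Q⁻¹ * (Q * M * Qᵀ) * (Q⁻¹)ᵀ = M := by
  rw [Matrix.transpose_nonsing_inv]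
  have h1 : Qᵀ * (Qᵀ)⁻¹ = 1 := Matrix.mul_nonsing_inv _ (by rwa [Matrix.det_transpose])
  calc Q⁻¹ * (Q * M * Qᵀ) * (Qᵀ)⁻¹
      = Q⁻¹ * Q * M * (Qᵀ * (Qᵀ)⁻¹) := by simp only [Matrix.mul_assoc]
    _ = M := by rw [h1, Matrix.nonsing_inv_mul _ hu, Matrix.mul_one, Matrix.one_mul]

def congFiberEquiv (hF2 : (2:F) = 0) {i₀ : ι} {r s : ι → F} (Q : Matrix ι ι F)
    (hu : IsUnit Q.det) (hrow : Q i₀ = Pi.single i₀ 1) (hmap : Q *ᵥ r = s) :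
    {M : {A : Matrix ι ι F // A.IsSymm ∧ (∀ i, A i i = 0) ∧ IsUnit A.det} // M.1 i₀ = r}
      ≃ {M : {A : Matrix ι ι F // A.IsSymm ∧ (∀ i, A i i = 0) ∧ IsUnit A.det} //
          M.1 i₀ = s} where
  toFun M := ⟨⟨Q * M.1.1 * Qᵀ, cong_mem hF2 M.1.2 hu⟩,
    by show (Q * M.1.1 * Qᵀ) i₀ = s; rw [cong_row hrow M.2, hmap]⟩
  invFun N := ⟨⟨Q⁻¹ * N.1.1 * (Q⁻¹)ᵀ, cong_mem hF2 N.1.2 (Q.isUnit_nonsing_inv_det hu)⟩,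
    by
      show (Q⁻¹ * N.1.1 * (Q⁻¹)ᵀ) i₀ = r
      rw [cong_row (inv_row hu hrow) N.2, ← hmap, Matrix.mulVec_mulVec,
        Matrix.nonsing_inv_mul Q hu, Matrix.one_mulVec]⟩
  left_inv M := by
    apply Subtype.ext; apply Subtype.ext
    exact cong_cancel hu M.1.1
  right_inv N := by
    apply Subtype.ext; apply Subtype.ext
    show Q * (Q⁻¹ * N.1.1 * (Q⁻¹)ᵀ) * Qᵀ = N.1.1
    have := cong_cancel (Q.isUnit_nonsing_inv_det hu) N.1.1
    rwa [Matrix.nonsing_inv_nonsing_inv Q hu] at this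

-- cardinality of the set of admissible first rows
def rowsEquiv (n : ℕ) :
    {r : Idx n → F // r (Sum.inl 0) = 0} ≃ ({i : Idx n // i ≠ Sum.inl 0} → F) where
  toFun := fun r j => r.1 j.1
  invFun := fun v => ⟨fun i => if h : i = Sum.inl 0 then 0 else v ⟨i, h⟩, by simp⟩
  left_inv := fun r => by
    apply Subtype.ext
    funext i
    by_cases h : i = Sum.inl 0
    · subst h; simp [r.2]
    · simp [h]
  right_inv := fun v => by
    funext j
    simp [j.2]

lemma card_rows (n : ℕ) :
    Nat.card {r : Idx n → F // r (Sum.inl 0) = 0 ∧ r ≠ 0}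
      = Fintype.card F ^ (n+1) - 1 := by
  have e1 : {r : Idx n → F // r (Sum.inl 0) = 0 ∧ r ≠ 0}
      ≃ {x : {r : Idx n → F // r (Sum.inl 0) = 0} // x.1 ≠ 0} :=
    (Equiv.subtypeSubtypeEquivSubtypeInter _ _).symm
  have e2 : {x : {r : Idx n → F // r (Sum.inl 0) = 0} // x.1 ≠ 0}
      ≃ {v : ({i : Idx n // i ≠ Sum.inl 0} → F) // v ≠ 0} := by
    refine Equiv.subtypeEquiv (rowsEquiv n) ?_
    intro x
    constructor
    · intro h hv
      apply h
      funext i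
      by_cases hi : i = Sum.inl 0
      · subst hi; simpa using x.2
      · simpa [rowsEquiv] using congrFun hv ⟨i, hi⟩
    · intro h hx
      apply h
      funext j
      simpa [rowsEquiv] using congrFun hx j.1
  rw [Nat.card_congr (e1.trans e2), card_ne_zero_fun]
  congr 2
  have : Fintype.card {i : Idx n // i ≠ Sum.inl 0}
      = Fintype.card (Idx n) - Fintype.card {i : Idx n // i = Sum.inl 0} := by
    have := Fintype.card_subtype_compl (fun i : Idx n => i = Sum.inl 0)
    simp only [ne_eq]
    convert this using 2
  rw [this]
  have h1 : Fintype.card {i : Idx n // i = Sum.inl 0} = 1 := by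
    rw [Fintype.card_eq_one_iff]
    exact ⟨⟨Sum.inl 0, rfl⟩, fun y => Subtype.ext y.2⟩
  simp [h1]
  omega

end Stmt7
namespace Stmt7
variable {F : Type} [Field F] [Fintype F]

lemma card_step (hF2 : (2:F) = 0) (n : ℕ) :
    Nat.card {M : Matrix (Idx n) (Idx n) F // M.IsSymm ∧ (∀ i, M i i = 0) ∧ IsUnit M.det}
      = (Fintype.card F ^ (n+1) - 1) * (Fintype.card F ^ n *
        Nat.card {C : Matrix (Fin n) (Fin n) F //
          C.IsSymm ∧ (∀ i, C i i = 0) ∧ IsUnit C.det}) := by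
  classical
  set T := {M : Matrix (Idx n) (Idx n) F // M.IsSymm ∧ (∀ i, M i i = 0) ∧ IsUnit M.det}
    with hT
  set R := {r : Idx n → F // r (Sum.inl 0) = 0 ∧ r ≠ 0} with hR
  have hrow_ne : ∀ M : T, M.1 (Sum.inl 0) ≠ 0 := by
    intro M h0
    have hdet : M.1.det = 0 :=
      Matrix.det_eq_zero_of_row_eq_zero (Sum.inl 0) (fun j => congrFun h0 j)
    have := M.2.2.2
    rw [hdet] at this
    exact not_isUnit_zero this
  set f : T → R := fun M => ⟨M.1 (Sum.inl 0), M.2.2.1 (Sum.inl 0), hrow_ne M⟩ with hf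
  have e_sigma : T ≃ Σ r : R, {M : T // f M = r} := (Equiv.sigmaFiberEquiv f).symm
  have card_fib : ∀ r : R, Fintype.card {M : T // f M = r}
      = Fintype.card F ^ n * Nat.card {C : Matrix (Fin n) (Fin n) F //
          C.IsSymm ∧ (∀ i, C i i = 0) ∧ IsUnit C.det} := by
    intro r
    have h01 : (Sum.inl 0 : Idx n) ≠ Sum.inl 1 := by simp
    obtain ⟨Q, hu, hrowQ, hmap⟩ := exists_Q h01 r.2.1 r.2.2
    have fib_equiv : {M : T // f M = r}
        ≃ (Fin n → F) × {C : Matrix (Fin n) (Fin n) F //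
            C.IsSymm ∧ (∀ i, C i i = 0) ∧ IsUnit C.det} :=
      ((Equiv.subtypeEquivRight (fun M => Subtype.ext_iff)).trans
        ((congFiberEquiv hF2 Q hu hrowQ hmap).trans
          ((Equiv.subtypeSubtypeEquivSubtypeInter _ _).trans (fiberEquiv n))))
    rw [Fintype.card_congr fib_equiv, Fintype.card_prod, Fintype.card_fun,
      Fintype.card_fin, Nat.card_eq_fintype_card]
  rw [Nat.card_eq_fintype_card, Fintype.card_congr e_sigma, Fintype.card_sigma]
  rw [Finset.sum_congr rfl (fun r _ => card_fib r), Finset.sum_const, smul_eq_mul]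
  congr 1
  rw [← card_rows (F := F) n, Nat.card_eq_fintype_card]
  rfl

end Stmt7
namespace Stmt7
variable {F : Type} [Field F] [Fintype F]

/-- shorthand for the count -/
noncomputable def Nk (F : Type) [Field F] [Fintype F] (k : ℕ) : ℕ :=
  Nat.card {M : Matrix (Fin k) (Fin k) F // M.IsSymm ∧ (∀ i, M i i = 0) ∧ IsUnit M.det}

lemma Nk_zero : Nk F 0 = 1 := by
  rw [Nk, Nat.card_eq_fintype_card, Fintype.card_eq_one_iff]
  refine ⟨⟨0, ?_, ?_, ?_⟩, ?_⟩
  · simp [Matrix.IsSymm]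
  · intro i; exact absurd i.2 (by omega)
  · rw [Matrix.det_fin_zero]; exact isUnit_one
  · rintro ⟨M, _⟩
    apply Subtype.ext
    ext i j
    exact absurd i.2 (by omega)

lemma Nk_one : Nk F 1 = 0 := by
  rw [Nk]
  have : IsEmpty {M : Matrix (Fin 1) (Fin 1) F //
      M.IsSymm ∧ (∀ i, M i i = 0) ∧ IsUnit M.det} := by
    constructor
    rintro ⟨M, _, hd, hu⟩
    rw [Matrix.det_fin_one, hd 0] at hu
    exact not_isUnit_zero hu
  exact Nat.card_of_isEmpty

lemma Nk_step (hF2 : (2:F) = 0) (n : ℕ) :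
    Nk F (n + 2) = (Fintype.card F ^ (n+1) - 1) * (Fintype.card F ^ n * Nk F n) := by
  have e : Idx n ≃ Fin (n + 2) := finSumFinEquiv.trans (finCongr (by omega))
  rw [Nk, ← Nat.card_congr (reindexEquiv (F := F) e), card_step hF2 n]
  rfl

lemma Nk_odd (hF2 : (2:F) = 0) (m : ℕ) : Nk F (2 * m + 1) = 0 := by
  induction m with
  | zero => exact Nk_one
  | succ k ih =>
    have h : 2 * (k + 1) + 1 = (2 * k + 1) + 2 := by omega
    rw [h, Nk_step hF2, ih, mul_zero, mul_zero]

lemma Nk_even (hF2 : (2:F) = 0) (hq : 1 ≤ Fintype.card F) (m : ℕ) :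
    (Nk F (2 * m) : ℝ) = (Fintype.card F : ℝ) ^ (m * (2 * m - 1))
      * ∏ j ∈ Finset.Icc 1 m,
          (1 - (Fintype.card F : ℝ) ^ ((1 : ℤ) - 2 * (j : ℤ))) := by
  set Q : ℝ := (Fintype.card F : ℝ) with hQ
  have hQ1 : (1:ℝ) ≤ Q := by rw [hQ]; exact_mod_cast hq
  have hQ0 : Q ≠ 0 := by positivity
  induction m with
  | zero => simp [Nk_zero]
  | succ k ih =>
    have h : 2 * (k + 1) = 2 * k + 2 := by omega
    rw [h, Nk_step hF2, Nat.cast_mul, Nat.cast_mul, ih]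
    have hc : ((Fintype.card F ^ (2*k+1) - 1 : ℕ) : ℝ) = Q ^ (2*k+1) - 1 := by
      have : 1 ≤ Fintype.card F ^ (2*k+1) := Nat.one_le_pow _ _ (by omega)
      push_cast [Nat.cast_sub this]
      ring
    rw [hc]
    rw [Finset.prod_Icc_succ_top (by omega)]
    push_cast
    have key : Q ^ ((k+1) * (2*(k+1) - 1)) * (1 - Q ^ ((1:ℤ) - 2*((k:ℤ)+1)))
        = (Q ^ (2*k+1) - 1) * (Q ^ (2*k) * Q ^ (k*(2*k-1))) := by
      have h1 : ((1:ℤ) - 2*((k:ℤ)+1)) = -((2*k+1 : ℕ) : ℤ) := by push_cast; ring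
      rw [h1, _root_.zpow_neg, zpow_natCast]
      have e1 : (k+1) * (2*(k+1) - 1) = (2*k+1) + (2*k + k*(2*k-1)) := by
        cases k with
        | zero => norm_num
        | succ l =>
          have h2 : 2*(l+1)-1 = 2*l+1 := by omega
          have h3 : 2*(l+1+1)-1 = 2*l+3 := by omega
          rw [h2, h3]; ring
      rw [e1, pow_add, pow_add]
      have hpow : Q ^ (2*k+1) ≠ 0 := pow_ne_zero _ hQ0
      field_simp
      ring
    calc (Q ^ (2*k+1) - 1) * (Q ^ (2*k) * (Q ^ (k*(2*k-1))
            * ∏ j ∈ Finset.Icc 1 k, (1 - Q ^ ((1:ℤ) - 2*(j:ℤ)))))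
        = (Q ^ (2*k+1) - 1) * (Q ^ (2*k) * Q ^ (k*(2*k-1)))
            * ∏ j ∈ Finset.Icc 1 k, (1 - Q ^ ((1:ℤ) - 2*(j:ℤ))) := by ring
      _ = Q ^ ((k+1) * (2*(k+1) - 1)) * (1 - Q ^ ((1:ℤ) - 2*((k:ℤ)+1)))
            * ∏ j ∈ Finset.Icc 1 k, (1 - Q ^ ((1:ℤ) - 2*(j:ℤ))) := by rw [key]
      _ = Q ^ ((k+1) * (2*(k+1) - 1))
            * ((∏ j ∈ Finset.Icc 1 k, (1 - Q ^ ((1:ℤ) - 2*(j:ℤ))))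
              * (1 - Q ^ ((1:ℤ) - 2*((k:ℤ)+1)))) := by ring

end Stmt7

/-- Over a finite field of order `q = 2^d`, there are no `n × n` symmetric
invertible matrices with zero diagonal when `n` is odd; and when `n` is even their number
is `q^{n(n-1)/2} ∏_{j=1}^{⌈(n-1)/2⌉} (1 - q^{1-2j})` (note `⌈(n-1)/2⌉ = n/2` for `n` even). -/
theorem stmt7 (d n : ℕ) (hd : 1 ≤ d) (F : Type) [Field F] [Fintype F]
    (hF : Fintype.card F = 2 ^ d) :
    (Odd n →
      Nat.card {M : Matrix (Fin n) (Fin n) F //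
        M.IsSymm ∧ (∀ i, M i i = 0) ∧ IsUnit M.det} = 0) ∧
    (Even n →
      (Nat.card {M : Matrix (Fin n) (Fin n) F //
          M.IsSymm ∧ (∀ i, M i i = 0) ∧ IsUnit M.det} : ℝ)
        = ((2 : ℝ) ^ d) ^ (n * (n - 1) / 2)
            * ∏ j ∈ Finset.Icc 1 (n / 2), (1 - ((2 : ℝ) ^ d) ^ ((1 : ℤ) - 2 * (j : ℤ)))) := by
  have hF2 : (2:F) = 0 := by
    have h := FiniteField.cast_card_eq_zero F
    rw [hF] at h
    push_cast at h
    exact (pow_eq_zero_iff (by omega)).1 h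
  constructor
  · rintro ⟨m, hm⟩
    have hn : n = 2*m+1 := by omega
    show Stmt7.Nk F n = 0
    rw [hn]
    exact Stmt7.Nk_odd hF2 m
  · rintro ⟨m, hm⟩
    have hn : n = 2*m := by omega
    have hq1 : 1 ≤ Fintype.card F := Fintype.card_pos
    have hcast : ((2:ℝ)^d) = (Fintype.card F : ℝ) := by rw [hF]; push_cast; ring
    have h1 : n*(n-1)/2 = m*(2*m-1) := by
      rw [hn]
      cases m with
      | zero => simp
      | succ l =>
        have h2 : 2*(l+1)-1 = 2*l+1 := by omega
        rw [h2]
        rw [show (2*(l+1))*(2*l+1) = 2*((l+1)*(2*l+1)) from by ring]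
        rw [Nat.mul_div_cancel_left _ (by norm_num : 0 < 2)]
    have h2 : n/2 = m := by omega
    show (Stmt7.Nk F n : ℝ) = _
    rw [hcast, h1, h2, hn]
    exact Stmt7.Nk_even hF2 hq1 m

end
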